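/- arXiv:2306.05724 — 6 statements merged into one kernel-verified Lean document; each statement's English description precedes it below -/
import Mathlib

section
/- The gap between the local entropy game and the marginalized entropy game is a KL-divergence: for every coalition S ⊆ Fin d and every x ∈ X, v_H(S, x) − v_{H*}(S, x) = Σ_{x' : x'_S = x_S} Σ_y P(x' | x_S) · p(y|x') · log( p(y|x') / p(y|x_S) ), where x'_S = x_S means x'_j = x_j for all j ∈ S. -/
open Finset Real

noncomputable section

/-- Conditional pmf `p(y | x_S)` in the finite discrete setting. -/
def condP {d : ℕ} {Xf : Fin d → Type*} {Y : Type*} [∀ j, Fintype (Xf j)] [Fintype Y]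
    [∀ j, DecidableEq (Xf j)]
    (p : ((∀ j, Xf j) × Y) → ℝ) (S : Finset (Fin d)) (x : ∀ j, Xf j) (y : Y) : ℝ :=
  (∑ x' : ∀ j, Xf j, if ∀ j ∈ S, x' j = x j then p (x', y) else 0) /
  (∑ x' : ∀ j, Xf j, if ∀ j ∈ S, x' j = x j then ∑ y' : Y, p (x', y') else 0)

/-- Marginal feature pmf `P(x)`. -/
def margP {d : ℕ} {Xf : Fin d → Type*} {Y : Type*} [Fintype Y]
    (p : ((∀ j, Xf j) × Y) → ℝ) (x : ∀ j, Xf j) : ℝ :=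
  ∑ y : Y, p (x, y)

/-- Local conditional entropy `H(Y | x_S)`. -/
def entY {d : ℕ} {Xf : Fin d → Type*} {Y : Type*} [∀ j, Fintype (Xf j)] [Fintype Y]
    [∀ j, DecidableEq (Xf j)]
    (p : ((∀ j, Xf j) × Y) → ℝ) (S : Finset (Fin d)) (x : ∀ j, Xf j) : ℝ :=
  -∑ y : Y, condP p S x y * Real.log (condP p S x y)

/-- The KL-divergence game `v_KL(S, x) = -D_KL(p(Y|x) ‖ p(Y|x_S))`. -/
def vKL {d : ℕ} {Xf : Fin d → Type*} {Y : Type*} [∀ j, Fintype (Xf j)] [Fintype Y]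
    [∀ j, DecidableEq (Xf j)]
    (p : ((∀ j, Xf j) × Y) → ℝ) (S : Finset (Fin d)) (x : ∀ j, Xf j) : ℝ :=
  -∑ y : Y, condP p Finset.univ x y *
      Real.log (condP p Finset.univ x y / condP p S x y)

/-- The cross-entropy game `v_CE(S, x) = -H(p(Y|x), p(Y|x_S))`. -/
def vCE {d : ℕ} {Xf : Fin d → Type*} {Y : Type*} [∀ j, Fintype (Xf j)] [Fintype Y]
    [∀ j, DecidableEq (Xf j)]
    (p : ((∀ j, Xf j) × Y) → ℝ) (S : Finset (Fin d)) (x : ∀ j, Xf j) : ℝ :=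
  ∑ y : Y, condP p Finset.univ x y * Real.log (condP p S x y)

/-- The information-gain game `v_IG(S, x) = -H(Y | x_S)`. -/
def vIG {d : ℕ} {Xf : Fin d → Type*} {Y : Type*} [∀ j, Fintype (Xf j)] [Fintype Y]
    [∀ j, DecidableEq (Xf j)]
    (p : ((∀ j, Xf j) × Y) → ℝ) (S : Finset (Fin d)) (x : ∀ j, Xf j) : ℝ :=
  -entY p S x

/-- The local entropy game `v_H(S, x) = H(Y | x_S)`. -/
def vH {d : ℕ} {Xf : Fin d → Type*} {Y : Type*} [∀ j, Fintype (Xf j)] [Fintype Y]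
    [∀ j, DecidableEq (Xf j)]
    (p : ((∀ j, Xf j) × Y) → ℝ) (S : Finset (Fin d)) (x : ∀ j, Xf j) : ℝ :=
  entY p S x

/-- The marginalized entropy game
`v_{H*}(S, x) = E[H(Y | x') | x'_S = x_S] = ∑_{x' : x'_S = x_S} P(x' | x_S) H(Y|x')`. -/
def vHstar {d : ℕ} {Xf : Fin d → Type*} {Y : Type*} [∀ j, Fintype (Xf j)] [Fintype Y]
    [∀ j, DecidableEq (Xf j)]
    (p : ((∀ j, Xf j) × Y) → ℝ) (S : Finset (Fin d)) (x : ∀ j, Xf j) : ℝ :=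
  ∑ x' : ∀ j, Xf j,
    if ∀ j ∈ S, x' j = x j then
      (margP p x' /
          ∑ x'' : ∀ j, Xf j, if ∀ j ∈ S, x'' j = x j then margP p x'' else 0) *
        entY p Finset.univ x'
    else 0

/-- The Shapley value `φ_v(j, x)` of feature `j` at point `x` for the game `v`. -/
def shapley {d : ℕ} {X : Type*} (v : Finset (Fin d) → X → ℝ) (j : Fin d) (x : X) : ℝ :=
  ∑ S ∈ (Finset.univ.erase j).powerset,
    ((S.card.factorial : ℝ) * ((d - S.card - 1).factorial : ℝ) / (d.factorial : ℝ)) *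
      (v (insert j S) x - v S x)

/-- the gap between the local entropy game and the marginalized entropy
game is a conditional KL-divergence. -/
theorem entropy_game_gap_is_kl {d : ℕ} (hd : 1 ≤ d) {Xf : Fin d → Type*} {Y : Type*}
    [∀ j, Fintype (Xf j)] [∀ j, Nonempty (Xf j)] [∀ j, DecidableEq (Xf j)]
    [Fintype Y] [Nonempty Y]
    (p : ((∀ j, Xf j) × Y) → ℝ)
    (hpos : ∀ z : ((∀ j, Xf j) × Y), 0 < p z)
    (hsum : ∑ z : ((∀ j, Xf j) × Y), p z = 1)
    (S : Finset (Fin d)) (x : ∀ j, Xf j) :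
    vH p S x - vHstar p S x =
      ∑ x' : ∀ j, Xf j,
        if ∀ j ∈ S, x' j = x j then
          ∑ y : Y,
            (margP p x' /
                ∑ x'' : ∀ j, Xf j, if ∀ j ∈ S, x'' j = x j then margP p x'' else 0) *
              (condP p Finset.univ x' y *
                Real.log (condP p Finset.univ x' y / condP p S x y))
        else 0 := by
  classical
  set W : ℝ := ∑ x'' : ∀ j, Xf j, if ∀ j ∈ S, x'' j = x j then margP p x'' else 0 with hWdef
  have hmarg : ∀ x' : ∀ j, Xf j, 0 < margP p x' := fun x' =>
    Finset.sum_pos (fun y _ => hpos (x', y)) Finset.univ_nonempty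
  have hW : 0 < W := by
    apply Finset.sum_pos' (fun i _ => by split; exacts [(hmarg i).le, le_rfl])
    exact ⟨x, Finset.mem_univ x, by simp [hmarg x]⟩
  have hcondU : ∀ (x' : ∀ j, Xf j) (y : Y),
      condP p Finset.univ x' y = p (x', y) / margP p x' := by
    intro x' y
    have h : ∀ x'' : ∀ j, Xf j, (∀ j ∈ (Finset.univ : Finset (Fin d)), x'' j = x' j) ↔ x'' = x' := by
      intro x''; simp [funext_iff]
    have e1 : (∑ x'' : ∀ j, Xf j, if ∀ j ∈ (Finset.univ : Finset (Fin d)), x'' j = x' j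
        then p (x'', y) else 0) = p (x', y) := by
      rw [Finset.sum_congr rfl fun x'' _ => if_congr (h x'') rfl rfl, Finset.sum_ite_eq']
      simp
    have e2 : (∑ x'' : ∀ j, Xf j, if ∀ j ∈ (Finset.univ : Finset (Fin d)), x'' j = x' j
        then ∑ y' : Y, p (x'', y') else 0) = margP p x' := by
      rw [Finset.sum_congr rfl fun x'' _ => if_congr (h x'') rfl rfl, Finset.sum_ite_eq']
      simp [margP]
    rw [condP, e1, e2]
  have hcondUpos : ∀ (x' : ∀ j, Xf j) (y : Y), 0 < condP p Finset.univ x' y := by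
    intro x' y; rw [hcondU]; exact div_pos (hpos _) (hmarg _)
  have hden : (∑ x' : ∀ j, Xf j, if ∀ j ∈ S, x' j = x j then ∑ y' : Y, p (x', y') else 0) = W := by
    simp [hWdef, margP]
  have hq : ∀ y, 0 < condP p S x y := by
    intro y
    rw [condP, hden]
    apply div_pos _ hW
    apply Finset.sum_pos' (fun i _ => by split <;> [exact (hpos _).le; rfl])
    exact ⟨x, Finset.mem_univ x, by simp [hpos (x, y)]⟩
  have hmix : ∀ y : Y,
      (∑ x' : ∀ j, Xf j, if ∀ j ∈ S, x' j = x j then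
        (margP p x' / W) * condP p Finset.univ x' y else 0) = condP p S x y := by
    intro y
    rw [condP, hden, Finset.sum_div]
    refine Finset.sum_congr rfl fun x' _ => ?_
    split
    · rw [hcondU, div_mul_div_comm, mul_comm W (margP p x'),
        mul_div_mul_left _ _ (hmarg x').ne']
    · simp
  have hlog : ∀ (x' : ∀ j, Xf j) (y : Y),
      Real.log (condP p Finset.univ x' y / condP p S x y)
        = Real.log (condP p Finset.univ x' y) - Real.log (condP p S x y) :=
    fun x' y => Real.log_div (hcondUpos x' y).ne' (hq y).ne'
  simp only [vH, vHstar, entY, hlog, mul_sub, Finset.sum_sub_distrib]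
  have hsplit : ∀ x' : ∀ j, Xf j,
      (if ∀ j ∈ S, x' j = x j then
        (∑ y : Y, margP p x' / W * (condP p Finset.univ x' y * Real.log (condP p Finset.univ x' y)))
        - ∑ y : Y, margP p x' / W * (condP p Finset.univ x' y * Real.log (condP p S x y)) else 0)
      = (if ∀ j ∈ S, x' j = x j then
          ∑ y : Y, margP p x' / W * (condP p Finset.univ x' y * Real.log (condP p Finset.univ x' y)) else 0)
        - (if ∀ j ∈ S, x' j = x j then
          ∑ y : Y, margP p x' / W * (condP p Finset.univ x' y * Real.log (condP p S x y)) else 0) := by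
    intro x'; split <;> simp
  rw [Finset.sum_congr rfl fun x' _ => hsplit x', Finset.sum_sub_distrib]
  have hB : (∑ x' : ∀ j, Xf j, if ∀ j ∈ S, x' j = x j then
      ∑ y : Y, margP p x' / W * (condP p Finset.univ x' y * Real.log (condP p S x y)) else 0)
      = ∑ y : Y, condP p S x y * Real.log (condP p S x y) := by
    have : ∀ x' : ∀ j, Xf j, (if ∀ j ∈ S, x' j = x j then
        ∑ y : Y, margP p x' / W * (condP p Finset.univ x' y * Real.log (condP p S x y)) else 0)
        = ∑ y : Y, (if ∀ j ∈ S, x' j = x j then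
            margP p x' / W * condP p Finset.univ x' y else 0) * Real.log (condP p S x y) := by
      intro x'; split <;> simp [mul_assoc]
    rw [Finset.sum_congr rfl fun x' _ => this x', Finset.sum_comm]
    exact Finset.sum_congr rfl fun y _ => by rw [← Finset.sum_mul, hmix]
  have hA : ∀ x' : ∀ j, Xf j, (if ∀ j ∈ S, x' j = x j then
      margP p x' / W * -∑ y : Y, condP p Finset.univ x' y * Real.log (condP p Finset.univ x' y) else 0)
      = -(if ∀ j ∈ S, x' j = x j then
        ∑ y : Y, margP p x' / W * (condP p Finset.univ x' y * Real.log (condP p Finset.univ x' y)) else 0) := by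
    intro x'; split <;> simp [Finset.mul_sum]
  rw [Finset.sum_congr rfl fun x' _ => hA x', Finset.sum_neg_distrib, hB]
  ring
end
end

section
/- Under the marginalized entropy game, Shapley values sum to the difference between local and global conditional entropy: for every x ∈ X, Σ_{j ∈ Fin d} φ_{v_{H*}}(j, x) = H(Y|x) − H(Y|X), where H(Y|x) := −Σ_y p(y|x) · log p(y|x) and H(Y|X) := Σ_{x'} P(x') · H(Y|x'). -/
open Finset Real

noncomputable section

lemma shapley_efficiency {d : ℕ} (hd : 1 ≤ d) {X : Type*}
    (v : Finset (Fin d) → X → ℝ) (x : X) :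
    ∑ j : Fin d, shapley v j x = v Finset.univ x - v ∅ x := by
  classical
  set w : ℕ → ℝ := fun k =>
    (k.factorial : ℝ) * ((d - k - 1).factorial : ℝ) / (d.factorial : ℝ) with hwdef
  have hdfac : (d.factorial : ℝ) ≠ 0 := Nat.cast_ne_zero.mpr d.factorial_ne_zero
  have hdd : ((d : ℝ)) * ((d - 1).factorial : ℝ) = (d.factorial : ℝ) := by
    exact_mod_cast congrArg (Nat.cast (R := ℝ)) (Nat.mul_factorial_pred (Nat.one_le_iff_ne_zero.mp hd))
  have key : ∀ j : Fin d, shapley v j x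
      = (∑ T ∈ Finset.univ.powerset.filter (fun T => j ∈ T),
          w (T.card - 1) * v T x)
        - ∑ S ∈ (Finset.univ.erase j).powerset, w S.card * v S x := by
    intro j
    unfold shapley
    have : ∀ S ∈ (Finset.univ.erase j).powerset,
        w S.card * (v (insert j S) x - v S x)
          = w S.card * v (insert j S) x - w S.card * v S x := fun S _ => mul_sub _ _ _
    rw [Finset.sum_congr rfl this, Finset.sum_sub_distrib]
    congr 1
    refine Finset.sum_nbij' (fun S => insert j S) (fun T => T.erase j) ?_ ?_ ?_ ?_ ?_
    · intro S hS
      simp only [Finset.mem_powerset, Finset.mem_filter]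
      exact ⟨Finset.subset_univ _, Finset.mem_insert_self _ _⟩
    · intro T hT
      simp only [Finset.mem_powerset]
      exact Finset.erase_subset_erase _ (Finset.subset_univ _)
    · intro S hS
      simp only [Finset.mem_powerset, Finset.subset_erase] at hS
      exact Finset.erase_insert hS.2
    · intro T hT
      simp only [Finset.mem_filter] at hT
      exact Finset.insert_erase hT.2
    · intro S hS
      simp only [Finset.mem_powerset, Finset.subset_erase] at hS
      rw [Finset.card_insert_of_notMem hS.2]
      simp
  rw [Finset.sum_congr rfl (fun j _ => key j), Finset.sum_sub_distrib]
  have h1 : ∑ j : Fin d, ∑ T ∈ Finset.univ.powerset.filter (fun T => j ∈ T),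
      w (T.card - 1) * v T x
      = ∑ T ∈ (Finset.univ : Finset (Fin d)).powerset,
          (T.card : ℝ) * (w (T.card - 1) * v T x) := by
    rw [Finset.sum_comm' (t' := (Finset.univ : Finset (Fin d)).powerset)
      (s' := fun T => T) (by intro j T; simp [and_comm])]
    exact Finset.sum_congr rfl fun T _ => by
      rw [Finset.sum_const, nsmul_eq_mul]
  have h2 : ∑ j : Fin d, ∑ S ∈ (Finset.univ.erase j).powerset, w S.card * v S x
      = ∑ S ∈ (Finset.univ : Finset (Fin d)).powerset,
          ((d - S.card : ℕ) : ℝ) * (w S.card * v S x) := by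
    rw [Finset.sum_comm' (t' := (Finset.univ : Finset (Fin d)).powerset)
      (s' := fun S => Sᶜ) (by
        intro j S
        simp [Finset.subset_erase, Finset.mem_compl, and_comm])]
    refine Finset.sum_congr rfl fun S _ => ?_
    rw [Finset.sum_const, nsmul_eq_mul, Finset.card_compl]
    simp
  rw [h1, h2, ← Finset.sum_sub_distrib]
  have key2 : ∀ T ∈ (Finset.univ : Finset (Fin d)).powerset,
      (T.card : ℝ) * (w (T.card - 1) * v T x)
        - ((d - T.card : ℕ) : ℝ) * (w T.card * v T x)
      = (if T = Finset.univ then v T x else 0) - (if T = ∅ then v T x else 0) := by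
    intro T hT
    have hcard : T.card ≤ d := by
      simpa using Finset.card_le_card (Finset.mem_powerset.mp hT)
    rcases Nat.eq_zero_or_pos T.card with hk0 | hkpos
    · have hTe : T = ∅ := Finset.card_eq_zero.mp hk0
      have hTne : T ≠ Finset.univ := by
        intro h
        rw [h, Finset.card_univ, Fintype.card_fin] at hk0
        omega
      rw [if_neg hTne, if_pos hTe, hk0]
      have hw0 : ((d - 0 : ℕ) : ℝ) * w 0 = 1 := by
        simp only [hwdef, Nat.sub_zero, Nat.factorial_zero, Nat.cast_one, one_mul]
        rw [mul_div_assoc', hdd, div_self hdfac]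
      push_cast
      rw [show ((d - 0 : ℕ) : ℝ) * (w 0 * v T x) = (((d - 0 : ℕ) : ℝ) * w 0) * v T x by ring,
        hw0]
      ring
    · rcases eq_or_lt_of_le hcard with hkd | hklt
      · have hTu : T = Finset.univ := Finset.eq_univ_of_card T (by simp [hkd])
        have hTne : T ≠ ∅ := by
          intro h; rw [h] at hkpos; simp at hkpos
        rw [if_pos hTu, if_neg hTne, hkd, Nat.sub_self, Nat.cast_zero, zero_mul]
        have hwd : ((d : ℕ) : ℝ) * w (d - 1) = 1 := by
          simp only [hwdef]
          rw [show d - (d - 1) - 1 = 0 from by omega, Nat.factorial_zero]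
          push_cast
          rw [mul_one, mul_div_assoc', hdd, div_self hdfac]
        rw [show ((d : ℕ) : ℝ) * (w (d - 1) * v T x) = (((d : ℕ) : ℝ) * w (d - 1)) * v T x
          by ring, hwd]
        ring
      · have hTne : T ≠ Finset.univ := by
          intro h; rw [h, Finset.card_univ, Fintype.card_fin] at hklt; omega
        have hTne' : T ≠ ∅ := by
          intro h; rw [h] at hkpos; simp at hkpos
        rw [if_neg hTne, if_neg hTne']
        have hA : (T.card : ℝ) * ((T.card - 1).factorial : ℝ) = (T.card.factorial : ℝ) := by
          exact_mod_cast congrArg (Nat.cast (R := ℝ)) (Nat.mul_factorial_pred hkpos.ne')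
        have hB : ((d - T.card : ℕ) : ℝ) * ((d - T.card - 1).factorial : ℝ)
            = ((d - T.card).factorial : ℝ) := by
          exact_mod_cast congrArg (Nat.cast (R := ℝ))
            (Nat.mul_factorial_pred (Nat.sub_pos_of_lt hklt).ne')
        have hw1 : (T.card : ℝ) * w (T.card - 1)
            = (T.card.factorial : ℝ) * ((d - T.card).factorial : ℝ) / (d.factorial : ℝ) := by
          simp only [hwdef]
          rw [show d - (T.card - 1) - 1 = d - T.card from by omega, ← hA]
          ring
        have hw2 : ((d - T.card : ℕ) : ℝ) * w T.card
            = (T.card.factorial : ℝ) * ((d - T.card).factorial : ℝ) / (d.factorial : ℝ) := by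
          simp only [hwdef]
          rw [show d - T.card - 1 = d - T.card - 1 from rfl, ← hB]
          ring
        rw [show (T.card : ℝ) * (w (T.card - 1) * v T x)
              - ((d - T.card : ℕ) : ℝ) * (w T.card * v T x)
            = ((T.card : ℝ) * w (T.card - 1)) * v T x
              - (((d - T.card : ℕ) : ℝ) * w T.card) * v T x by ring, hw1, hw2]
        ring
  rw [Finset.sum_congr rfl key2, Finset.sum_sub_distrib,
    Finset.sum_ite_eq' _ Finset.univ (fun T => v T x),
    Finset.sum_ite_eq' _ ∅ (fun T => v T x)]
  simp

lemma vHstar_univ {d : ℕ} {Xf : Fin d → Type*} {Y : Type*}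
    [∀ j, Fintype (Xf j)] [∀ j, DecidableEq (Xf j)] [Fintype Y] [Nonempty Y]
    (p : ((∀ j, Xf j) × Y) → ℝ) (hpos : ∀ z, 0 < p z) (x : ∀ j, Xf j) :
    vHstar p Finset.univ x = entY p Finset.univ x := by
  classical
  have hm : ∀ x' : ∀ j, Xf j, 0 < margP p x' := fun x' =>
    Finset.sum_pos (fun y _ => hpos _) Finset.univ_nonempty
  unfold vHstar
  have hcond : ∀ x' : ∀ j, Xf j,
      (∀ j ∈ (Finset.univ : Finset (Fin d)), x' j = x j) ↔ x' = x := by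
    intro x'; simp [funext_iff]
  calc ∑ x' : ∀ j, Xf j,
      (if ∀ j ∈ (Finset.univ : Finset (Fin d)), x' j = x j then
        (margP p x' /
            ∑ x'' : ∀ j, Xf j,
              if ∀ j ∈ (Finset.univ : Finset (Fin d)), x'' j = x j then margP p x'' else 0) *
          entY p Finset.univ x'
      else 0)
      = ∑ x' : ∀ j, Xf j,
        (if x' = x then
          (margP p x' /
              ∑ x'' : ∀ j, Xf j, if x'' = x then margP p x'' else 0) *
            entY p Finset.univ x'
        else 0) := by
        apply Finset.sum_congr rfl
        intro x' _
        simp only [hcond]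
    _ = entY p Finset.univ x := by
        rw [Finset.sum_ite_eq' Finset.univ x, Finset.sum_ite_eq' Finset.univ x]
        simp [div_self (ne_of_gt (hm x))]

lemma vHstar_empty {d : ℕ} {Xf : Fin d → Type*} {Y : Type*}
    [∀ j, Fintype (Xf j)] [∀ j, DecidableEq (Xf j)] [Fintype Y]
    (p : ((∀ j, Xf j) × Y) → ℝ) (hsum : ∑ z : ((∀ j, Xf j) × Y), p z = 1)
    (x : ∀ j, Xf j) :
    vHstar p (∅ : Finset (Fin d)) x
      = ∑ x' : ∀ j, Xf j, margP p x' * entY p Finset.univ x' := by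
  classical
  have hden : ∑ x'' : ∀ j, Xf j, margP p x'' = 1 := by
    unfold margP
    rw [← Fintype.sum_prod_type]
    exact hsum
  unfold vHstar
  simp only [Finset.notMem_empty, false_implies, implies_true, if_true]
  rw [hden]
  simp

/-- under the marginalized entropy game, Shapley values sum to
`H(Y|x) - H(Y|X)`. -/
theorem shapley_hstar_sum {d : ℕ} (hd : 1 ≤ d) {Xf : Fin d → Type*} {Y : Type*}
    [∀ j, Fintype (Xf j)] [∀ j, Nonempty (Xf j)] [∀ j, DecidableEq (Xf j)]
    [Fintype Y] [Nonempty Y]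
    (p : ((∀ j, Xf j) × Y) → ℝ)
    (hpos : ∀ z : ((∀ j, Xf j) × Y), 0 < p z)
    (hsum : ∑ z : ((∀ j, Xf j) × Y), p z = 1)
    (x : ∀ j, Xf j) :
    ∑ j : Fin d, shapley (vHstar p) j x =
      entY p Finset.univ x -
        ∑ x' : ∀ j, Xf j, margP p x' * entY p Finset.univ x' := by
  rw [shapley_efficiency hd (vHstar p) x, vHstar_univ p hpos x, vHstar_empty p hsum x]
end
end

section
/- The population average of the marginal contribution in the KL-divergence game equals an expected KL-divergence and is hence nonnegative: for every j ∈ Fin d and S ⊆ Fin d with j ∉ S, Σ_x P(x) · Δ_{v_KL}(S, j, x) = Σ_x P(x) · Σ_y p(y | x_{S∪{j}}) · log( p(y | x_{S∪{j}}) / p(y | x_S) ), and this common value is ≥ 0. -/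
open Finset Real

noncomputable section

section Helpers

variable {d : ℕ} {Xf : Fin d → Type*} {Y : Type*}
  [∀ j, Fintype (Xf j)] [Fintype Y] [∀ j, DecidableEq (Xf j)] [Nonempty Y]
  (p : ((∀ j, Xf j) × Y) → ℝ)

/-- numerator of condP -/
def numP (S : Finset (Fin d)) (x : ∀ j, Xf j) (y : Y) : ℝ :=
  ∑ x' : ∀ j, Xf j, if ∀ j ∈ S, x' j = x j then p (x', y) else 0

/-- denominator of condP -/
def denP (S : Finset (Fin d)) (x : ∀ j, Xf j) : ℝ :=
  ∑ x' : ∀ j, Xf j, if ∀ j ∈ S, x' j = x j then ∑ y' : Y, p (x', y') else 0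

lemma condP_eq (S : Finset (Fin d)) (x : ∀ j, Xf j) (y : Y) :
    condP p S x y = numP p S x y / denP p S x := rfl

variable (hpos : ∀ z : ((∀ j, Xf j) × Y), 0 < p z)

include hpos

set_option linter.unusedSectionVars false

lemma margP_pos (x : ∀ j, Xf j) : 0 < margP p x :=
  Finset.sum_pos (fun y _ => hpos (x, y)) Finset.univ_nonempty

lemma denP_pos (S : Finset (Fin d)) (x : ∀ j, Xf j) : 0 < denP p S x := by
  apply Finset.sum_pos'
  · intro x' _
    split_ifs
    · exact (margP_pos p hpos x').le
    · exact le_refl 0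
  · refine ⟨x, Finset.mem_univ x, ?_⟩
    rw [if_pos (fun j _ => rfl)]
    exact Finset.sum_pos (fun y _ => hpos (x, y)) Finset.univ_nonempty

lemma numP_pos (S : Finset (Fin d)) (x : ∀ j, Xf j) (y : Y) : 0 < numP p S x y := by
  apply Finset.sum_pos'
  · intro x' _
    split_ifs
    · exact (hpos (x', y)).le
    · exact le_refl 0
  · refine ⟨x, Finset.mem_univ x, ?_⟩
    rw [if_pos (fun j _ => rfl)]
    exact hpos (x, y)

lemma condP_pos (S : Finset (Fin d)) (x : ∀ j, Xf j) (y : Y) : 0 < condP p S x y :=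
  div_pos (numP_pos p hpos S x y) (denP_pos p hpos S x)

lemma sum_numP (S : Finset (Fin d)) (x : ∀ j, Xf j) :
    ∑ y : Y, numP p S x y = denP p S x := by
  unfold numP denP
  rw [Finset.sum_comm]
  refine Finset.sum_congr rfl fun x' _ => ?_
  split_ifs <;> simp

lemma sum_condP (S : Finset (Fin d)) (x : ∀ j, Xf j) :
    ∑ y : Y, condP p S x y = 1 := by
  simp only [condP_eq]
  rw [← Finset.sum_div, sum_numP p hpos, div_self (denP_pos p hpos S x).ne']

lemma denP_congr (S : Finset (Fin d)) {x x' : ∀ j, Xf j} (h : ∀ j ∈ S, x' j = x j) :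
    denP p S x' = denP p S x := by
  refine Finset.sum_congr rfl fun z _ => ?_
  have hiff : (∀ j ∈ S, z j = x' j) ↔ (∀ j ∈ S, z j = x j) := by
    constructor <;> intro hz j hj
    · rw [hz j hj, h j hj]
    · rw [hz j hj, ← h j hj]
  simp only [hiff]

lemma condP_congr (S : Finset (Fin d)) {x x' : ∀ j, Xf j} (h : ∀ j ∈ S, x' j = x j) (y : Y) :
    condP p S x' y = condP p S x y := by
  have hiff : ∀ z : ∀ j, Xf j, (∀ j ∈ S, z j = x' j) ↔ (∀ j ∈ S, z j = x j) := by
    intro z; constructor <;> intro hz j hj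
    · rw [hz j hj, h j hj]
    · rw [hz j hj, ← h j hj]
  unfold condP
  simp only [hiff]

lemma condP_univ (x : ∀ j, Xf j) (y : Y) :
    condP p Finset.univ x y = p (x, y) / margP p x := by
  have hiff : ∀ x' : ∀ j, Xf j, (∀ j ∈ Finset.univ, x' j = x j) ↔ x' = x := fun x' =>
    ⟨fun h => funext fun j => h j (Finset.mem_univ j), fun h j _ => by rw [h]⟩
  unfold condP margP
  simp only [hiff]
  rw [Finset.sum_ite_eq' Finset.univ x (fun x' => p (x', y)),
    Finset.sum_ite_eq' Finset.univ x (fun x' => ∑ y' : Y, p (x', y'))]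
  simp

lemma margP_mul_condP_univ (x : ∀ j, Xf j) (y : Y) :
    margP p x * condP p Finset.univ x y = p (x, y) := by
  rw [condP_univ p hpos, mul_div_cancel₀ _ (margP_pos p hpos x).ne']

lemma grouping (T : Finset (Fin d)) (y : Y) (L : (∀ j, Xf j) → ℝ)
    (hL : ∀ x x' : ∀ j, Xf j, (∀ j ∈ T, x' j = x j) → L x' = L x) :
    ∑ x : ∀ j, Xf j, margP p x * condP p T x y * L x = ∑ x : ∀ j, Xf j, p (x, y) * L x := by
  have key : ∀ x : ∀ j, Xf j, margP p x * condP p T x y * L x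
      = ∑ x' : ∀ j, Xf j,
          if ∀ j ∈ T, x' j = x j then p (x', y) * (margP p x * L x / denP p T x) else 0 := by
    intro x
    rw [condP_eq]
    have : margP p x * (numP p T x y / denP p T x) * L x
        = numP p T x y * (margP p x * L x / denP p T x) := by ring
    rw [this, numP, Finset.sum_mul]
    refine Finset.sum_congr rfl fun x' _ => ?_
    split_ifs <;> simp
  calc ∑ x : ∀ j, Xf j, margP p x * condP p T x y * L x
      = ∑ x : ∀ j, Xf j, ∑ x' : ∀ j, Xf j,
          if ∀ j ∈ T, x' j = x j then p (x', y) * (margP p x * L x / denP p T x) else 0 :=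
        Finset.sum_congr rfl fun x _ => key x
    _ = ∑ x' : ∀ j, Xf j, ∑ x : ∀ j, Xf j,
          if ∀ j ∈ T, x' j = x j then p (x', y) * (margP p x * L x / denP p T x) else 0 :=
        Finset.sum_comm
    _ = ∑ x' : ∀ j, Xf j, p (x', y) * L x' := by
        refine Finset.sum_congr rfl fun x' _ => ?_
        have step : ∀ x : ∀ j, Xf j,
            (if ∀ j ∈ T, x' j = x j then p (x', y) * (margP p x * L x / denP p T x) else 0)
            = (if ∀ j ∈ T, x' j = x j then margP p x else 0)
                * (p (x', y) * L x' / denP p T x') := by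
          intro x
          split_ifs with h
          · rw [← denP_congr p hpos T h, ← hL x x' h]; ring
          · simp
        rw [Finset.sum_congr rfl fun x _ => step x, ← Finset.sum_mul]
        have hden : (∑ x : ∀ j, Xf j, if ∀ j ∈ T, x' j = x j then margP p x else 0)
            = denP p T x' := by
          unfold denP margP
          refine Finset.sum_congr rfl fun z _ => ?_
          have hiff : (∀ j ∈ T, x' j = z j) ↔ (∀ j ∈ T, z j = x' j) := by
            constructor <;> intro h j hj <;> exact (h j hj).symm
          simp only [hiff]
        rw [hden, mul_comm, div_mul_cancel₀ _ (denP_pos p hpos T x').ne']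

end Helpers

lemma kl_nonneg {Z : Type*} [Fintype Z] (q r : Z → ℝ) (hq : ∀ z, 0 < q z) (hr : ∀ z, 0 < r z)
    (hq1 : ∑ z : Z, q z = 1) (hr1 : ∑ z : Z, r z = 1) :
    0 ≤ ∑ z : Z, q z * Real.log (q z / r z) := by
  have h : ∀ z, q z - r z ≤ q z * Real.log (q z / r z) := by
    intro z
    have h2 : Real.log (q z / r z) = - Real.log (r z / q z) := by
      rw [← Real.log_inv]
      congr 1
      rw [inv_div]
    rw [h2]
    have h1 : Real.log (r z / q z) ≤ r z / q z - 1 :=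
      Real.log_le_sub_one_of_pos (div_pos (hr z) (hq z))
    have h3 := mul_le_mul_of_nonneg_left h1 (hq z).le
    have h4 : q z * (r z / q z) = r z := mul_div_cancel₀ _ (hq z).ne'
    nlinarith
  calc (0 : ℝ) = ∑ z : Z, (q z - r z) := by rw [Finset.sum_sub_distrib, hq1, hr1]; ring
    _ ≤ _ := Finset.sum_le_sum fun z _ => h z



/-- the population average of the KL-game marginal contribution equals an
expected KL-divergence and is nonnegative. -/
theorem avg_kl_marginal_contribution {d : ℕ} (hd : 1 ≤ d) {Xf : Fin d → Type*} {Y : Type*}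
    [∀ j, Fintype (Xf j)] [∀ j, Nonempty (Xf j)] [∀ j, DecidableEq (Xf j)]
    [Fintype Y] [Nonempty Y]
    (p : ((∀ j, Xf j) × Y) → ℝ)
    (hpos : ∀ z : ((∀ j, Xf j) × Y), 0 < p z)
    (hsum : ∑ z : ((∀ j, Xf j) × Y), p z = 1)
    (j : Fin d) (S : Finset (Fin d)) (hjS : j ∉ S) :
    (∑ x : ∀ j, Xf j,
        margP p x * (vKL p (insert j S) x - vKL p S x) =
      ∑ x : ∀ j, Xf j,
        margP p x *
          ∑ y : Y, condP p (insert j S) x y *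
            Real.log (condP p (insert j S) x y / condP p S x y)) ∧
    0 ≤ ∑ x : ∀ j, Xf j,
        margP p x * (vKL p (insert j S) x - vKL p S x) := by
  classical
  set T := insert j S with hT
  have hST : ∀ {x x' : ∀ j, Xf j}, (∀ i ∈ T, x' i = x i) → (∀ i ∈ S, x' i = x i) :=
    fun h i hi => h i (Finset.mem_insert_of_mem hi)
  -- pointwise rewriting of the marginal contribution
  have ptwise : ∀ x : ∀ j, Xf j,
      margP p x * (vKL p T x - vKL p S x)
      = ∑ y : Y, p (x, y) * Real.log (condP p T x y / condP p S x y) := by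
    intro x
    have hsumexp : vKL p T x - vKL p S x
        = ∑ y : Y, condP p Finset.univ x y * Real.log (condP p T x y / condP p S x y) := by
      unfold vKL
      rw [neg_sub_neg, ← Finset.sum_sub_distrib]
      refine Finset.sum_congr rfl fun y _ => ?_
      rw [← mul_sub]
      congr 1
      rw [Real.log_div (condP_pos p hpos Finset.univ x y).ne' (condP_pos p hpos S x y).ne',
        Real.log_div (condP_pos p hpos Finset.univ x y).ne' (condP_pos p hpos T x y).ne',
        Real.log_div (condP_pos p hpos T x y).ne' (condP_pos p hpos S x y).ne']
      ring
    rw [hsumexp, Finset.mul_sum]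
    refine Finset.sum_congr rfl fun y _ => ?_
    rw [← mul_assoc, margP_mul_condP_univ p hpos]
  have heq : (∑ x : ∀ j, Xf j, margP p x * (vKL p T x - vKL p S x))
      = ∑ x : ∀ j, Xf j,
          margP p x * ∑ y : Y, condP p T x y *
            Real.log (condP p T x y / condP p S x y) := by
    calc ∑ x : ∀ j, Xf j, margP p x * (vKL p T x - vKL p S x)
        = ∑ x : ∀ j, Xf j, ∑ y : Y,
            p (x, y) * Real.log (condP p T x y / condP p S x y) :=
          Finset.sum_congr rfl fun x _ => ptwise x
      _ = ∑ y : Y, ∑ x : ∀ j, Xf j,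
            p (x, y) * Real.log (condP p T x y / condP p S x y) := Finset.sum_comm
      _ = ∑ y : Y, ∑ x : ∀ j, Xf j, margP p x * condP p T x y *
            Real.log (condP p T x y / condP p S x y) := by
          refine Finset.sum_congr rfl fun y _ => ?_
          refine (grouping p hpos T y
            (fun x => Real.log (condP p T x y / condP p S x y)) ?_).symm
          intro x x' h
          beta_reduce
          rw [condP_congr p hpos T h, condP_congr p hpos S (fun i hi => hST h i hi)]
      _ = ∑ x : ∀ j, Xf j, ∑ y : Y, margP p x * condP p T x y *
            Real.log (condP p T x y / condP p S x y) := Finset.sum_comm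
      _ = ∑ x : ∀ j, Xf j, margP p x * ∑ y : Y, condP p T x y *
            Real.log (condP p T x y / condP p S x y) := by
          refine Finset.sum_congr rfl fun x _ => ?_
          rw [Finset.mul_sum]
          exact Finset.sum_congr rfl fun y _ => by ring
  refine ⟨heq, ?_⟩
  rw [heq]
  refine Finset.sum_nonneg fun x _ => mul_nonneg (margP_pos p hpos x).le ?_
  exact kl_nonneg (fun y => condP p T x y) (fun y => condP p S x y)
    (fun y => condP_pos p hpos T x y) (fun y => condP_pos p hpos S x y)
    (sum_condP p hpos T x) (sum_condP p hpos S x)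
end
end

section
/- Split conformal coverage (upper bound under continuity): let φ_1, …, φ_m, φ_{m+1} be i.i.d. real-valued random variables on a probability space (Ω, F, P) with m ≥ 1, and assume P(φ_i = φ_j) = 0 for all i ≠ j (almost surely no ties). Let α ∈ (0,1), set ℓ := ⌈(m+1)·α/2⌉ and u := ⌈(m+1)·(1−α/2)⌉, and assume 1 ≤ ℓ ≤ u ≤ m. For each ω ∈ Ω, let q_lo(ω) be the ℓ-th smallest and q_hi(ω) the u-th smallest value (counted with multiplicity) among φ_1(ω), …, φ_m(ω). Then P( q_lo ≤ φ_{m+1} ≤ q_hi ) ≤ 1 − α + 2/(m+1). -/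
open Finset Real

noncomputable section

/-- The `k`-th smallest value (counted with multiplicity) among `g 0, …, g (m-1)`. -/
noncomputable def orderStat (m : ℕ) (g : Fin m → ℝ) (k : ℕ) : ℝ :=
  (List.insertionSort (· ≤ ·) (List.ofFn g)).getD (k - 1) 0

open MeasureTheory ProbabilityTheory

theorem countP_ofFn (m : ℕ) (g : Fin m → ℝ) (p : ℝ → Bool) :
    (List.ofFn g).countP p = (univ.filter fun i => p (g i)).card := by
  rw [List.ofFn_eq_map, List.countP_map]
  simp [List.countP_eq_length_filter, Finset.filter, Finset.card, Fin.univ_def,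
    Multiset.filter_coe, Function.comp_def]

theorem card_eq_countP (m : ℕ) (g : Fin m → ℝ) (x : ℝ) :
    (univ.filter fun i => g i < x).card
      = (List.insertionSort (· ≤ ·) (List.ofFn g)).countP (fun y => decide (y < x)) := by
  rw [(List.perm_insertionSort _ _).countP_eq, countP_ofFn]
  simp

theorem le_count_of_orderStat_le (m : ℕ) (g : Fin m → ℝ) (x : ℝ)
    (hne : ∀ i, g i ≠ x) (k : ℕ) (hk1 : 1 ≤ k) (hkm : k ≤ m)
    (h : orderStat m g k ≤ x) :
    k ≤ (univ.filter fun i => g i < x).card := by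
  set L := List.insertionSort (· ≤ ·) (List.ofFn g) with hL
  have hlen : L.length = m := by
    rw [hL, List.length_insertionSort, List.length_ofFn]
  have hsort : L.Pairwise (· ≤ ·) := List.pairwise_insertionSort _ _
  have hk1m : k - 1 < L.length := by omega
  have hos : orderStat m g k = L[k-1] := List.getD_eq_getElem _ _ hk1m
  rw [card_eq_countP]
  rw [← hL, ← List.take_append_drop k L, List.countP_append]
  have htake : (L.take k).countP (fun y => decide (y < x)) = k := by
    have hall : ∀ y ∈ L.take k, (fun y => decide (y < x)) y = true := by
      intro y hy
      rw [List.mem_take_iff_getElem] at hy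
      obtain ⟨j, hj, rfl⟩ := hy
      have hjl : j < L.length := lt_of_lt_of_le (lt_min_iff.mp hj).1 (by omega)
      have h1 : L[j] ≤ L[k-1] := by
        apply hsort.rel_get_of_le
        simp only [Fin.mk_le_mk]
        have := (lt_min_iff.mp hj).1
        omega
      have h2 : L[j] ≠ x := by
        have h3 : L[j] ∈ L := List.getElem_mem _
        have h4 : L[j] ∈ List.ofFn g :=
          (List.perm_insertionSort (· ≤ ·) (List.ofFn g)).mem_iff.mp h3
        rw [List.mem_ofFn] at h4
        obtain ⟨i, hi⟩ := h4
        exact hi ▸ hne i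
      simp only [decide_eq_true_eq]
      rcases lt_or_eq_of_le (le_trans h1 (hos ▸ h)) with h' | h'
      · exact h'
      · exact absurd h' h2
    rw [List.countP_eq_length.mpr hall, List.length_take, hlen]
    omega
  omega

theorem count_le_of_le_orderStat (m : ℕ) (g : Fin m → ℝ) (x : ℝ)
    (u : ℕ) (hu1 : 1 ≤ u) (hum : u ≤ m)
    (h : x ≤ orderStat m g u) :
    (univ.filter fun i => g i < x).card ≤ u - 1 := by
  set L := List.insertionSort (· ≤ ·) (List.ofFn g) with hL
  have hlen : L.length = m := by
    rw [hL, List.length_insertionSort, List.length_ofFn]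
  have hsort : L.Pairwise (· ≤ ·) := List.pairwise_insertionSort _ _
  have hu1m : u - 1 < L.length := by omega
  have hos : orderStat m g u = L[u-1] := List.getD_eq_getElem _ _ hu1m
  rw [card_eq_countP]
  rw [← hL, ← List.take_append_drop (u-1) L, List.countP_append]
  have hdrop : (L.drop (u-1)).countP (fun y => decide (y < x)) = 0 := by
    rw [List.countP_eq_zero]
    intro y hy
    rw [List.mem_drop_iff_getElem] at hy
    obtain ⟨j, hj, rfl⟩ := hy
    have h1 : L[u-1] ≤ L[u-1+j] := by
      apply hsort.rel_get_of_le
      simp only [Fin.mk_le_mk]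
      omega
    simp only [decide_eq_true_eq, not_lt]
    exact le_trans (hos ▸ h) h1
  have := List.countP_le_length (p := fun y => decide (y < x)) (l := L.take (u-1))
  have hlt : (L.take (u-1)).length = u - 1 := by
    rw [List.length_take]; omega
  omega

/-- Number of coordinates strictly below coordinate `i`. -/
noncomputable def cnt {n : ℕ} (v : Fin n → ℝ) (i : Fin n) : ℕ :=
  (univ.filter fun j => v j < v i).card

/-- The no-ties set. -/
def NT (n : ℕ) : Set (Fin n → ℝ) := {v | ∀ i j : Fin n, i ≠ j → v i ≠ v j}

lemma measurable_cnt {n : ℕ} (i : Fin n) : Measurable (fun v : Fin n → ℝ => cnt v i) := by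
  have : (fun v : Fin n → ℝ => cnt v i)
      = fun v => ∑ j : Fin n, if v j < v i then 1 else 0 := by
    ext v; rw [cnt, Finset.card_filter]
  rw [this]
  exact Finset.measurable_sum _ fun j _ =>
    Measurable.ite (measurableSet_lt (measurable_pi_apply j) (measurable_pi_apply i))
      measurable_const measurable_const

lemma measurableSet_NT (n : ℕ) : MeasurableSet (NT n) := by
  have : NT n = ⋂ (i : Fin n) (j : Fin n) (_ : i ≠ j), {v : Fin n → ℝ | v i = v j}ᶜ := by
    ext v; simp [NT]
  rw [this]
  exact MeasurableSet.iInter fun i => MeasurableSet.iInter fun j => MeasurableSet.iInter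
    fun _ => (measurableSet_eq_fun (measurable_pi_apply i) (measurable_pi_apply j)).compl

lemma cnt_lt {n : ℕ} (v : Fin n → ℝ) (i : Fin n) : cnt v i < n := by
  have h : (univ.filter fun j => v j < v i) ⊆ univ.erase i := by
    intro j hj
    simp only [mem_filter] at hj
    refine Finset.mem_erase.mpr ⟨fun hji => ?_, mem_univ _⟩
    exact absurd (hji ▸ hj.2) (lt_irrefl _)
  have hle := Finset.card_le_card h
  have h2 : (univ.erase i).card = n - 1 := by
    rw [Finset.card_erase_of_mem (mem_univ _), Finset.card_univ, Fintype.card_fin]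
  have hpos : 0 < n := i.pos
  unfold cnt
  omega

lemma cnt_injOn {n : ℕ} {v : Fin n → ℝ} (hv : v ∈ NT n) :
    Function.Injective (fun i => cnt v i) := by
  intro i j hij
  by_contra hne
  wlog hlt : v i < v j generalizing i j
  · exact this hij.symm (Ne.symm hne) (lt_of_le_of_ne (not_lt.mp hlt) (hv j i (Ne.symm hne)))
  have hss : (univ.filter fun k => v k < v i) ⊂ univ.filter fun k => v k < v j := by
    refine Finset.ssubset_iff_of_subset (fun k hk => ?_) |>.mpr ⟨i, ?_, ?_⟩
    · simp only [mem_filter] at *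
      exact ⟨mem_univ _, lt_trans hk.2 hlt⟩
    · simp [hlt]
    · simp
  have := Finset.card_lt_card hss
  simp only [cnt] at hij
  omega

lemma exists_cnt_eq {n : ℕ} {v : Fin n → ℝ} (hv : v ∈ NT n) {r : ℕ} (hr : r < n) :
    ∃ i, cnt v i = r := by
  have hinj : Function.Injective (fun i => (⟨cnt v i, cnt_lt v i⟩ : Fin n)) := by
    intro i j h
    exact cnt_injOn hv (by simpa using congrArg Fin.val h)
  have hsurj := Finite.surjective_of_injective hinj
  obtain ⟨i, hi⟩ := hsurj ⟨r, hr⟩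
  exact ⟨i, congrArg Fin.val hi⟩

lemma cnt_comp_perm {n : ℕ} (σ : Equiv.Perm (Fin n)) (v : Fin n → ℝ) (i : Fin n) :
    cnt (v ∘ σ) i = cnt v (σ i) := by
  unfold cnt
  apply Finset.card_nbij (fun j => σ j)
  · intro j hj; simp only [mem_coe, mem_filter, Function.comp_apply] at *; exact ⟨mem_univ _, hj.2⟩
  · intro a ha b hb hab; exact σ.injective hab
  · intro k hk
    simp only [Set.mem_image, mem_coe, mem_filter, Function.comp_apply] at *
    exact ⟨σ.symm k, ⟨mem_univ _, by simpa using hk.2⟩, by simp⟩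

lemma comp_perm_mem_NT {n : ℕ} (σ : Equiv.Perm (Fin n)) {v : Fin n → ℝ} :
    v ∘ σ ∈ NT n ↔ v ∈ NT n := by
  constructor
  · intro h i j hij
    have := h (σ.symm i) (σ.symm j) (fun hc => hij (by simpa using congrArg σ hc))
    simpa using this
  · intro h i j hij
    exact h (σ i) (σ j) (fun hc => hij (σ.injective hc))

lemma pi_map_comp_perm {n : ℕ} (μ : Measure ℝ) [IsProbabilityMeasure μ] (σ : Equiv.Perm (Fin n)) :
    (Measure.pi fun _ : Fin n => μ).map (fun v => v ∘ σ) = Measure.pi fun _ : Fin n => μ := by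
  have h := MeasureTheory.measurePreserving_piCongrLeft (fun _ : Fin n => μ) σ.symm
  have hc : ⇑(MeasurableEquiv.piCongrLeft (fun _ : Fin n => ℝ) σ.symm) = fun v => v ∘ σ := by
    ext v i
    simp [MeasurableEquiv.piCongrLeft, Equiv.piCongrLeft, Equiv.piCongrLeft']
  have := h.map_eq
  rwa [hc] at this

lemma measurable_comp_perm {n : ℕ} (σ : Equiv.Perm (Fin n)) :
    Measurable (fun v : Fin n → ℝ => v ∘ σ) :=
  measurable_pi_lambda _ fun i => measurable_pi_apply (σ i)

lemma slice_meas {n : ℕ} (i : Fin n) (r : ℕ) :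
    MeasurableSet (NT n ∩ {v | cnt v i = r}) :=
  (measurableSet_NT n).inter ((measurable_cnt i) (MeasurableSet.singleton r))

lemma cnt_slice_eq {n : ℕ} (μ : Measure ℝ) [IsProbabilityMeasure μ] (i j : Fin n) (r : ℕ) :
    (Measure.pi fun _ : Fin n => μ) (NT n ∩ {v | cnt v i = r})
      = (Measure.pi fun _ : Fin n => μ) (NT n ∩ {v | cnt v j = r}) := by
  set σ : Equiv.Perm (Fin n) := Equiv.swap i j with hσ
  have h1 : (Measure.pi fun _ : Fin n => μ) (NT n ∩ {v | cnt v i = r})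
      = (Measure.pi fun _ : Fin n => μ) ((fun v => v ∘ σ) ⁻¹' (NT n ∩ {v | cnt v i = r})) := by
    conv_lhs => rw [← pi_map_comp_perm μ σ]
    rw [Measure.map_apply (measurable_comp_perm σ) (slice_meas i r)]
  have h2 : (fun v : Fin n → ℝ => v ∘ σ) ⁻¹' (NT n ∩ {v | cnt v i = r})
      = NT n ∩ {v | cnt v (σ i) = r} := by
    ext v
    simp only [Set.mem_preimage, Set.mem_inter_iff, Set.mem_setOf_eq]
    rw [comp_perm_mem_NT σ, cnt_comp_perm σ v i]
  rw [h1, h2, hσ, Equiv.swap_apply_left]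

lemma cnt_uniform {n : ℕ} (μ : Measure ℝ) [IsProbabilityMeasure μ]
    (hN : (Measure.pi fun _ : Fin n => μ) (NT n)ᶜ = 0) (i : Fin n) (r : ℕ) (hr : r < n) :
    (Measure.pi fun _ : Fin n => μ) (NT n ∩ {v | cnt v i = r}) = (n : ENNReal)⁻¹ := by
  set Pm := Measure.pi fun _ : Fin n => μ with hPm
  have hNT1 : Pm (NT n) = 1 := by
    have := measure_add_measure_compl (μ := Pm) (measurableSet_NT n)
    rw [hN, add_zero] at this
    simp [this]
  have hdisj : Set.PairwiseDisjoint (univ : Finset (Fin n))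
      (fun k => NT n ∩ {v | cnt v k = r}) := by
    intro a _ b _ hab
    refine Set.disjoint_left.mpr fun v hva hvb => ?_
    exact hab (cnt_injOn hva.1 (hva.2.trans hvb.2.symm))
  have hunion : ⋃ k ∈ (univ : Finset (Fin n)), (NT n ∩ {v | cnt v k = r}) = NT n := by
    ext v
    simp only [Set.mem_iUnion, Set.mem_inter_iff, Set.mem_setOf_eq, Finset.mem_univ,
      exists_true_left, exists_prop, true_and]
    constructor
    · rintro ⟨k, hk, _⟩; exact hk
    · intro hv; obtain ⟨k, hk⟩ := exists_cnt_eq hv hr; exact ⟨k, hv, hk⟩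
  have hsum : ∑ k : Fin n, Pm (NT n ∩ {v | cnt v k = r}) = 1 := by
    rw [← measure_biUnion_finset hdisj (fun k _ => slice_meas k r), hunion, hNT1]
  have hconst : ∀ k : Fin n, Pm (NT n ∩ {v | cnt v k = r}) = Pm (NT n ∩ {v | cnt v i = r}) :=
    fun k => cnt_slice_eq μ k i r
  rw [Finset.sum_congr rfl (fun k _ => hconst k), Finset.sum_const, Finset.card_univ,
    Fintype.card_fin, nsmul_eq_mul] at hsum
  have hn0 : (n : ENNReal) ≠ 0 := by
    have : 0 < n := lt_of_le_of_lt (Nat.zero_le r) hr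
    simp; omega
  calc Pm (NT n ∩ {v | cnt v i = r})
      = ((n : ENNReal)⁻¹ * n) * Pm (NT n ∩ {v | cnt v i = r}) := by
        rw [ENNReal.inv_mul_cancel hn0 (by simp), one_mul]
    _ = (n : ENNReal)⁻¹ * ((n : ENNReal) * Pm (NT n ∩ {v | cnt v i = r})) := by ring
    _ = (n : ENNReal)⁻¹ := by rw [hsum, mul_one]

lemma map_eq_pi {Ω : Type*} [MeasurableSpace Ω] (P : Measure Ω) [IsProbabilityMeasure P]
    {n : ℕ} (φ : Fin n → Ω → ℝ) (hmeas : ∀ i, Measurable (φ i))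
    (hindep : iIndepFun φ P) :
    P.map (fun ω i => φ i ω) = Measure.pi (fun i => P.map (φ i)) := by
  haveI : ∀ i, IsProbabilityMeasure (P.map (φ i)) :=
    fun i => Measure.isProbabilityMeasure_map (hmeas i).aemeasurable
  refine (Measure.pi_eq (μ := fun i => P.map (φ i)) fun s hs => ?_).symm
  rw [Measure.map_apply (measurable_pi_lambda _ fun i => hmeas i) (MeasurableSet.univ_pi hs)]
  have h : (fun ω i => φ i ω) ⁻¹' Set.pi Set.univ s = ⋂ i ∈ Finset.univ, φ i ⁻¹' s i := by
    ext ω; simp [Set.mem_pi]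
  rw [h, hindep.measure_inter_preimage_eq_mul Finset.univ (fun i _ => hs i)]
  exact Finset.prod_congr rfl fun i _ => (Measure.map_apply (hmeas i) (hs i)).symm

/-- split conformal coverage (upper bound under continuity). -/
theorem split_conformal_coverage_upper {Ω : Type*} [MeasurableSpace Ω]
    (P : MeasureTheory.Measure Ω) [MeasureTheory.IsProbabilityMeasure P]
    (m : ℕ) (hm : 1 ≤ m) (φ : Fin (m + 1) → Ω → ℝ)
    (hmeas : ∀ i, Measurable (φ i))
    (hindep : ProbabilityTheory.iIndepFun φ P)
    (hid : ∀ i k : Fin (m + 1),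
      MeasureTheory.Measure.map (φ i) P = MeasureTheory.Measure.map (φ k) P)
    (hties : ∀ i k : Fin (m + 1), i ≠ k → P {ω | φ i ω = φ k ω} = 0)
    (α : ℝ) (hα : α ∈ Set.Ioo (0 : ℝ) 1)
    (ℓ u : ℕ)
    (hℓ : ℓ = ⌈((m : ℝ) + 1) * α / 2⌉₊)
    (hu : u = ⌈((m : ℝ) + 1) * (1 - α / 2)⌉₊)
    (hℓ1 : 1 ≤ ℓ) (hℓu : ℓ ≤ u) (hum : u ≤ m) :
    (P {ω | orderStat m (fun i => φ i.castSucc ω) ℓ ≤ φ (Fin.last m) ω ∧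
            φ (Fin.last m) ω ≤ orderStat m (fun i => φ i.castSucc ω) u}).toReal ≤
      1 - α + 2 / ((m : ℝ) + 1) := by
  obtain ⟨hα0, hα1⟩ := hα
  set μ := P.map (φ 0) with hμdef
  haveI : IsProbabilityMeasure μ := Measure.isProbabilityMeasure_map (hmeas 0).aemeasurable
  set Pm := Measure.pi fun _ : Fin (m+1) => μ with hPmdef
  set X : Ω → Fin (m+1) → ℝ := fun ω i => φ i ω with hXdef
  have hXmeas : Measurable X := measurable_pi_lambda _ fun i => hmeas i
  have hmap : P.map X = Pm := by
    rw [hXdef, map_eq_pi P φ hmeas hindep, hPmdef]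
    exact congrArg Measure.pi (funext fun i => hid i 0)
  have hPpre : ∀ S : Set (Fin (m+1) → ℝ), MeasurableSet S → P (X ⁻¹' S) = Pm S := by
    intro S hS
    rw [← hmap, Measure.map_apply hXmeas hS]
  have hNc : Pm (NT (m+1))ᶜ = 0 := by
    have hsub : (NT (m+1))ᶜ
        ⊆ ⋃ (i : Fin (m+1)) (j : Fin (m+1)) (_ : i ≠ j), {v : Fin (m+1) → ℝ | v i = v j} := by
      intro v hv
      simp only [NT, Set.mem_compl_iff, Set.mem_setOf_eq, not_forall] at hv
      obtain ⟨i, j, hij, hv⟩ := hv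
      simp only [Set.mem_iUnion]
      exact ⟨i, j, hij, not_ne_iff.mp hv⟩
    refine measure_mono_null hsub ?_
    refine measure_iUnion_null fun i => measure_iUnion_null fun j =>
      measure_iUnion_null fun hij => ?_
    have hSm : MeasurableSet {v : Fin (m+1) → ℝ | v i = v j} :=
      measurableSet_eq_fun (measurable_pi_apply i) (measurable_pi_apply j)
    have hpre : X ⁻¹' {v : Fin (m+1) → ℝ | v i = v j} = {ω | φ i ω = φ j ω} := rfl
    rw [← hPpre _ hSm, hpre]
    exact hties i j hij
  have hcntlast : ∀ v : Fin (m+1) → ℝ,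
      cnt v (Fin.last m)
        = (univ.filter fun i : Fin m => v i.castSucc < v (Fin.last m)).card := by
    intro v
    rw [cnt, Finset.card_filter, Finset.card_filter, Fin.sum_univ_castSucc]
    simp
  set C : Set (Fin (m+1) → ℝ) :=
    {v | ℓ ≤ cnt v (Fin.last m) ∧ cnt v (Fin.last m) ≤ u - 1} with hCdef
  have hCmeas : MeasurableSet C := by
    have h1 : C = (fun v : Fin (m+1) → ℝ => cnt v (Fin.last m)) ⁻¹' (Set.Icc ℓ (u-1)) := by
      ext v; simp [hCdef, Set.mem_Icc]
    rw [h1]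
    exact measurable_cnt _ measurableSet_Icc
  have hsub : {ω | orderStat m (fun i => φ i.castSucc ω) ℓ ≤ φ (Fin.last m) ω ∧
        φ (Fin.last m) ω ≤ orderStat m (fun i => φ i.castSucc ω) u}
      ⊆ (X ⁻¹' (NT (m+1) ∩ C)) ∪ (X ⁻¹' (NT (m+1))ᶜ) := by
    intro ω hω
    by_cases hNv : X ω ∈ NT (m+1)
    · left
      have hne : ∀ i : Fin m, X ω i.castSucc ≠ X ω (Fin.last m) := fun i =>
        hNv i.castSucc (Fin.last m) (ne_of_lt (Fin.castSucc_lt_last i))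
      refine Set.mem_preimage.mpr ⟨hNv, ?_, ?_⟩
      · rw [hcntlast (X ω)]
        exact le_count_of_orderStat_le m (fun i => X ω i.castSucc) (X ω (Fin.last m))
          hne ℓ hℓ1 (hℓu.trans hum) hω.1
      · rw [hcntlast (X ω)]
        exact count_le_of_le_orderStat m (fun i => X ω i.castSucc) (X ω (Fin.last m))
          u (hℓ1.trans hℓu) hum hω.2
    · right; exact hNv
  have hNCunion : NT (m+1) ∩ C
      = ⋃ r ∈ Finset.Icc ℓ (u-1), (NT (m+1) ∩ {v | cnt v (Fin.last m) = r}) := by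
    ext v
    simp only [Set.mem_inter_iff, Set.mem_setOf_eq, Set.mem_iUnion, Finset.mem_Icc,
      exists_prop, hCdef]
    constructor
    · rintro ⟨hv, h1, h2⟩; exact ⟨cnt v (Fin.last m), ⟨h1, h2⟩, hv, rfl⟩
    · rintro ⟨r, ⟨h1, h2⟩, hv, hr⟩; exact ⟨hv, hr ▸ h1, hr ▸ h2⟩
  have hPmNC : Pm (NT (m+1) ∩ C) = (u - ℓ : ℕ) * ((m+1 : ℕ) : ENNReal)⁻¹ := by
    rw [hNCunion, measure_biUnion_finset ?_ (fun r _ => slice_meas _ r)]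
    · have heach : ∀ r ∈ Finset.Icc ℓ (u-1),
          Pm (NT (m+1) ∩ {v | cnt v (Fin.last m) = r}) = ((m+1 : ℕ) : ENNReal)⁻¹ := by
        intro r hr
        rw [Finset.mem_Icc] at hr
        exact cnt_uniform μ hNc (Fin.last m) r (by omega)
      rw [Finset.sum_congr rfl heach, Finset.sum_const, Nat.card_Icc, nsmul_eq_mul]
      congr 2
      omega
    · intro a _ b _ hab
      refine Set.disjoint_left.mpr fun v hva hvb => ?_
      exact hab (hva.2.symm.trans hvb.2)
  have hPbound : P {ω | orderStat m (fun i => φ i.castSucc ω) ℓ ≤ φ (Fin.last m) ω ∧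
        φ (Fin.last m) ω ≤ orderStat m (fun i => φ i.castSucc ω) u}
      ≤ (u - ℓ : ℕ) * ((m+1 : ℕ) : ENNReal)⁻¹ := by
    calc P _ ≤ P ((X ⁻¹' (NT (m+1) ∩ C)) ∪ (X ⁻¹' (NT (m+1))ᶜ)) := measure_mono hsub
      _ ≤ P (X ⁻¹' (NT (m+1) ∩ C)) + P (X ⁻¹' (NT (m+1))ᶜ) := measure_union_le _ _
      _ = Pm (NT (m+1) ∩ C) + Pm (NT (m+1))ᶜ := by
          rw [hPpre _ ((measurableSet_NT _).inter hCmeas), hPpre _ (measurableSet_NT _).compl]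
      _ = (u - ℓ : ℕ) * ((m+1 : ℕ) : ENNReal)⁻¹ := by rw [hPmNC, hNc, add_zero]
  have hfin : ((u - ℓ : ℕ) : ENNReal) * ((m+1 : ℕ) : ENNReal)⁻¹ ≠ ⊤ :=
    ENNReal.mul_ne_top (by simp) (by simp)
  have htoReal := ENNReal.toReal_mono hfin hPbound
  refine le_trans htoReal ?_
  rw [ENNReal.toReal_mul, ENNReal.toReal_inv]
  simp only [ENNReal.toReal_natCast]
  have hml : (0:ℝ) < (m:ℝ) + 1 := by positivity
  have hℓR : ((m : ℝ) + 1) * α / 2 ≤ (ℓ : ℝ) := hℓ ▸ Nat.le_ceil _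
  have huR : (u : ℝ) < ((m:ℝ)+1) * (1 - α/2) + 1 := by
    rw [hu]; exact Nat.ceil_lt_add_one (by nlinarith)
  have hcast : ((u - ℓ : ℕ) : ℝ) = (u : ℝ) - (ℓ : ℝ) := by
    rw [Nat.cast_sub hℓu]
  rw [hcast]
  have hcast2 : ((m + 1 : ℕ) : ℝ) = (m : ℝ) + 1 := by push_cast; ring
  rw [hcast2, ← div_eq_mul_inv, div_le_iff₀ hml]
  have hexp : (1 - α + 2/((m:ℝ)+1)) * ((m:ℝ)+1) = (1-α)*((m:ℝ)+1) + 2 := by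
    field_simp
  rw [hexp]
  nlinarith

end
end

section
/- Exchangeable rank identity under continuity: let φ_1, …, φ_m, φ_{m+1} be i.i.d. real-valued random variables on a probability space (Ω, F, P) with m ≥ 1, and assume P(φ_i = φ_j) = 0 for all i ≠ j (almost surely no ties). Let 1 ≤ k ≤ m and, for each ω ∈ Ω, let φ_{(k)}(ω) denote the k-th smallest value (counted with multiplicity) among φ_1(ω), …, φ_m(ω). Then P( φ_{m+1} ≤ φ_{(k)} ) = k/(m+1). -/
open Finset Real

noncomputable section

namespace ExchRank

open MeasureTheory ProbabilityTheory

lemma sorted_le_getD_iff (L : List ℝ) (hL : L.Pairwise (· ≤ ·)) (j : ℕ) (hj : j < L.length)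
    (t : ℝ) : t ≤ L.getD j 0 ↔ L.countP (fun a => a < t) ≤ j := by
  rw [List.getD_eq_getElem _ _ hj]
  constructor
  · intro h
    have hsplit : L = L.take j ++ L.drop j := (List.take_append_drop j L).symm
    have h2 : (L.drop j).countP (fun a => a < t) = 0 := by
      rw [List.countP_eq_zero]
      intro a ha
      obtain ⟨i, hi, rfl⟩ := List.mem_iff_getElem.mp ha
      have hji : j + i < L.length := by
        have := hi; rw [List.length_drop] at this; omega
      rw [List.getElem_drop] at ha ⊢
      have : L[j] ≤ L[j + i] := by
        apply List.Pairwise.rel_get_of_le hL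
        simp [Nat.le_add_right]
      simp only [decide_eq_true_eq] at *
      simp only [decide_eq_false_iff_not, not_lt]
      exact le_trans h this
    calc L.countP (fun a => a < t)
        = (L.take j).countP (fun a => a < t) + (L.drop j).countP (fun a => a < t) := by
          conv_lhs => rw [hsplit]
          rw [List.countP_append]
      _ ≤ (L.take j).length + 0 := by rw [h2]; exact Nat.add_le_add List.countP_le_length le_rfl
      _ ≤ j := by simp [List.length_take]
  · intro h
    by_contra hlt
    push_neg at hlt
    have hall : ∀ a ∈ L.take (j+1), a < t := by
      intro a ha
      obtain ⟨i, hi, rfl⟩ := List.mem_iff_getElem.mp ha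
      rw [List.getElem_take] at *
      have hij : i ≤ j := by
        have := hi; rw [List.length_take] at this
        omega
      have : L[i] ≤ L[j] := by
        apply List.Pairwise.rel_get_of_le hL
        simpa using hij
      exact lt_of_le_of_lt this hlt
    have hcnt : (L.take (j+1)).countP (fun a => a < t) = (L.take (j+1)).length := by
      rw [List.countP_eq_length]
      intro a ha; simpa using hall a ha
    have hlen : (L.take (j+1)).length = j + 1 := by
      rw [List.length_take]; omega
    have : j + 1 ≤ L.countP (fun a => a < t) := by
      calc j + 1 = (L.take (j+1)).countP (fun a => a < t) := by rw [hcnt, hlen]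
        _ ≤ L.countP (fun a => a < t) := by
            conv_rhs => rw [← List.take_append_drop (j+1) L]
            rw [List.countP_append]; omega
    omega

lemma countP_ofFn' {m : ℕ} (g : Fin m → ℝ) (p : ℝ → Prop) [DecidablePred p] :
    (List.ofFn g).countP (fun a => decide (p a)) = (univ.filter fun i => p (g i)).card := by
  induction m with
  | zero => simp
  | succ n ih =>
      rw [List.ofFn_succ, List.countP_cons, Fin.card_filter_univ_succ' (fun i => p (g i)), ih]
      simp [add_comm]

lemma le_orderStat_iff {m k : ℕ} (hk1 : 1 ≤ k) (hkm : k ≤ m) (g : Fin m → ℝ) (t : ℝ) :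
    t ≤ orderStat m g k ↔ (univ.filter fun i => g i < t).card ≤ k - 1 := by
  have hperm : (List.insertionSort (· ≤ ·) (List.ofFn g)).Perm (List.ofFn g) :=
    List.perm_insertionSort _ _
  have hlen : (List.insertionSort (· ≤ ·) (List.ofFn g)).length = m := by
    rw [hperm.length_eq, List.length_ofFn]
  rw [orderStat, sorted_le_getD_iff _ (List.pairwise_insertionSort _ _) _ (by omega) t,
    hperm.countP_eq, countP_ofFn' g (fun a => a < t)]

noncomputable def rankF {n : ℕ} (x : Fin n → ℝ) (j : Fin n) : ℕ :=
  (univ.filter fun i => x i < x j).card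

lemma rankF_lt {n : ℕ} (x : Fin n → ℝ) (j : Fin n) : rankF x j < n := by
  have : (univ.filter fun i => x i < x j) ⊂ univ := by
    rw [Finset.ssubset_univ_iff]
    intro h
    have hj : j ∈ univ.filter fun i => x i < x j := by rw [h]; exact mem_univ j
    simp at hj
  simpa [rankF] using Finset.card_lt_card this

lemma rankF_lt_rankF {n : ℕ} {x : Fin n → ℝ} {j j' : Fin n} (h : x j < x j') :
    rankF x j < rankF x j' := by
  apply Finset.card_lt_card
  constructor
  · intro i hi
    simp only [mem_filter, mem_univ, true_and] at *
    exact lt_trans hi h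
  · intro hsub
    have hj : j ∈ univ.filter fun i => x i < x j' := by simp [h]
    have := hsub hj
    simp at this

lemma rankF_injective {n : ℕ} {x : Fin n → ℝ} (hx : Function.Injective x) :
    Function.Injective (rankF x) := by
  intro j j' h
  rcases lt_trichotomy (x j) (x j') with hlt | heq | hgt
  · exact absurd h (rankF_lt_rankF hlt).ne
  · exact hx heq
  · exact absurd h.symm (rankF_lt_rankF hgt).ne

lemma rankF_existsUnique {n : ℕ} {x : Fin n → ℝ} (hx : Function.Injective x) (r : ℕ)
    (hr : r < n) : ∃! j : Fin n, rankF x j = r := by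
  have hinj : Function.Injective (fun j => (⟨rankF x j, rankF_lt x j⟩ : Fin n)) := by
    intro a b hab
    exact rankF_injective hx (by simpa [Fin.ext_iff] using hab)
  have hsurj := Finite.surjective_of_injective hinj
  obtain ⟨j, hj⟩ := hsurj ⟨r, hr⟩
  refine ⟨j, by simpa [Fin.ext_iff, eq_comm] using hj, ?_⟩
  intro j' hj'
  apply rankF_injective hx
  rw [hj']
  simpa [Fin.ext_iff, eq_comm] using hj

lemma rankF_comp {n : ℕ} (x : Fin n → ℝ) (e : Equiv.Perm (Fin n)) (j : Fin n) :
    rankF (x ∘ e) j = rankF x (e j) := by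
  unfold rankF
  apply Finset.card_bij' (fun i _ => e i) (fun i _ => e.symm i) <;> intros <;> simp_all

lemma measurable_rankF {n : ℕ} (j : Fin n) :
    Measurable fun x : Fin n → ℝ => rankF x j := by
  have h : (fun x : Fin n → ℝ => rankF x j)
      = fun x => ∑ i : Fin n, if x i < x j then 1 else 0 := by
    funext x; rw [rankF, Finset.card_filter]
  rw [h]
  exact Finset.measurable_sum _ fun i _ =>
    Measurable.ite (measurableSet_lt (measurable_pi_apply i) (measurable_pi_apply j))
      measurable_const measurable_const

lemma card_filter_castSucc {m : ℕ} (x : Fin (m+1) → ℝ) :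
    (univ.filter fun i : Fin m => x i.castSucc < x (Fin.last m)).card
      = rankF x (Fin.last m) := by
  rw [rankF, Finset.card_filter, Finset.card_filter, Fin.sum_univ_castSucc]
  simp

variable {Ω : Type*} [MeasurableSpace Ω] (P : Measure Ω) [IsProbabilityMeasure P]

lemma joint_law {n : ℕ} (φ : Fin n → Ω → ℝ) (hmeas : ∀ i, Measurable (φ i))
    (hindep : iIndepFun φ P)
    (ν : Measure ℝ) [SigmaFinite ν] (hid : ∀ i, P.map (φ i) = ν) (e : Equiv.Perm (Fin n)) :
    P.map (fun ω i => φ (e i) ω) = Measure.pi (fun _ => ν) := by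
  refine (Measure.pi_eq fun s hs => ?_).symm
  have hmX : Measurable (fun ω (i : Fin n) => φ (e i) ω) :=
    measurable_pi_lambda _ (fun i => hmeas _)
  rw [Measure.map_apply hmX (MeasurableSet.univ_pi hs)]
  have hpre : (fun ω i => φ (e i) ω) ⁻¹' (Set.univ.pi s) =
      ⋂ i ∈ univ, φ i ⁻¹' (s (e.symm i)) := by
    ext ω
    simp only [Set.mem_preimage, Set.mem_pi, Set.mem_univ, forall_true_left, Set.mem_iInter,
      mem_coe, mem_univ, true_implies]
    constructor
    · intro h i; have := h (e.symm i); simpa using this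
    · intro h i; have := h (e i); simpa using this
  rw [hpre, hindep.measure_inter_preimage_eq_mul univ (fun i _ => hs _)]
  have hv : ∀ i, P (φ i ⁻¹' s (e.symm i)) = ν (s (e.symm i)) := fun i => by
    rw [← hid i, Measure.map_apply (hmeas i) (hs _)]
  simp_rw [hv]
  exact Equiv.prod_comp e.symm (fun i => ν (s i))

end ExchRank

open ExchRank MeasureTheory ProbabilityTheory in
/-- exchangeable rank identity under continuity. -/
theorem exchangeable_rank_identity {Ω : Type*} [MeasurableSpace Ω]
    (P : MeasureTheory.Measure Ω) [MeasureTheory.IsProbabilityMeasure P]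
    (m : ℕ) (hm : 1 ≤ m) (φ : Fin (m + 1) → Ω → ℝ)
    (hmeas : ∀ i, Measurable (φ i))
    (hindep : ProbabilityTheory.iIndepFun φ P)
    (hid : ∀ i k : Fin (m + 1),
      MeasureTheory.Measure.map (φ i) P = MeasureTheory.Measure.map (φ k) P)
    (hties : ∀ i k : Fin (m + 1), i ≠ k → P {ω | φ i ω = φ k ω} = 0)
    (k : ℕ) (hk1 : 1 ≤ k) (hkm : k ≤ m) :
    (P {ω | φ (Fin.last m) ω ≤ orderStat m (fun i => φ i.castSucc ω) k}).toReal =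
      (k : ℝ) / ((m : ℝ) + 1) := by
  classical
  set ν := P.map (φ (Fin.last m)) with hνdef
  have hν : IsProbabilityMeasure ν := Measure.isProbabilityMeasure_map (hmeas _).aemeasurable
  set X : Ω → (Fin (m+1) → ℝ) := fun ω i => φ i ω with hXdef
  have hmX : Measurable X := measurable_pi_lambda _ hmeas
  have hid' : ∀ i, P.map (φ i) = ν := fun i => hid i (Fin.last m)
  set E : Fin (m+1) → ℕ → Set Ω := fun j r => {ω | rankF (X ω) j = r} with hEdef
  have hSmeas : ∀ (j : Fin (m+1)) (r : ℕ), MeasurableSet {x : Fin (m+1) → ℝ | rankF x j = r} :=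
    fun j r => measurable_rankF j (measurableSet_singleton r)
  have hEmeas : ∀ j r, MeasurableSet (E j r) := fun j r => hmX (hSmeas j r)
  have hmap : ∀ e : Equiv.Perm (Fin (m+1)),
      P.map (fun ω i => φ (e i) ω) = Measure.pi (fun _ => ν) :=
    joint_law P φ hmeas hindep ν hid'
  have hPE : ∀ j r, P (E j r) = Measure.pi (fun _ : Fin (m+1) => ν) {x | rankF x j = r} := by
    intro j r
    have h1 := hmap (Equiv.refl _)
    simp only [Equiv.refl_apply] at h1
    rw [← h1, Measure.map_apply hmX (hSmeas j r)]
    rfl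
  have hPE_eq : ∀ j r, P (E j r) = P (E (Fin.last m) r) := by
    intro j r
    have he := hmap (Equiv.swap j (Fin.last m))
    have hmX' : Measurable (fun ω i => φ (Equiv.swap j (Fin.last m) i) ω) :=
      measurable_pi_lambda _ fun i => hmeas _
    have h2 := congrArg (fun μ : Measure (Fin (m+1) → ℝ) =>
      μ {x | rankF x (Fin.last m) = r}) he
    rw [Measure.map_apply hmX' (hSmeas _ r)] at h2
    have hpre : (fun ω i => φ (Equiv.swap j (Fin.last m) i) ω) ⁻¹'
        {x | rankF x (Fin.last m) = r} = E j r := by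
      ext ω
      simp only [Set.mem_preimage, Set.mem_setOf_eq, hEdef]
      have hc : (fun i => φ (Equiv.swap j (Fin.last m) i) ω)
          = X ω ∘ (Equiv.swap j (Fin.last m)) := rfl
      rw [hc, rankF_comp, Equiv.swap_apply_right]
    rw [hpre] at h2
    rw [hPE (Fin.last m) r, ← h2]
  have hD : P {ω | ¬ Function.Injective fun i => φ i ω} = 0 := by
    have hsub : {ω | ¬ Function.Injective fun i => φ i ω} ⊆
        ⋃ (i : Fin (m+1)) (j : Fin (m+1)), {ω | i ≠ j ∧ φ i ω = φ j ω} := by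
      intro ω hω
      simp only [Set.mem_setOf_eq, Function.Injective] at hω
      push_neg at hω
      obtain ⟨i, j, hij, hne⟩ := hω
      exact Set.mem_iUnion.2 ⟨i, Set.mem_iUnion.2 ⟨j, hne, hij⟩⟩
    refine measure_mono_null hsub ?_
    refine measure_iUnion_null fun i => measure_iUnion_null fun j => ?_
    by_cases hij : i = j
    · have : {ω | i ≠ j ∧ φ i ω = φ j ω} = ∅ := by
        ext ω; simp [hij]
      simp [this]
    · exact measure_mono_null (fun ω hω => hω.2) (hties i j hij)
  have hsum1 : ∀ r : ℕ, r < m + 1 → ∑ j : Fin (m+1), P (E j r) = 1 := by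
    intro r hr
    have hUnion : P (⋃ j, E j r) = 1 := by
      have hcover : {ω | Function.Injective fun i => φ i ω} ⊆ ⋃ j, E j r := by
        intro ω hω
        obtain ⟨j, hj, _⟩ := rankF_existsUnique hω r hr
        exact Set.mem_iUnion.2 ⟨j, hj⟩
      apply le_antisymm prob_le_one
      calc (1:ENNReal) = P Set.univ := measure_univ.symm
        _ ≤ P ((⋃ j, E j r) ∪ {ω | ¬ Function.Injective fun i => φ i ω}) := by
            apply measure_mono; intro ω _
            by_cases h : Function.Injective fun i => φ i ω
            · exact Or.inl (hcover h)
            · exact Or.inr h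
        _ ≤ P (⋃ j, E j r) + P {ω | ¬ Function.Injective fun i => φ i ω} := measure_union_le _ _
        _ = P (⋃ j, E j r) := by rw [hD, add_zero]
    have hdisj : Pairwise (Function.onFun (MeasureTheory.AEDisjoint P) fun j => E j r) := by
      intro j j' hjj'
      apply measure_mono_null ?_ hD
      rintro ω ⟨h1, h2⟩
      simp only [hEdef, Set.mem_setOf_eq] at h1 h2 ⊢
      intro hinj
      exact hjj' (rankF_injective hinj (h1.trans h2.symm))
    rw [← hUnion, measure_iUnion₀ hdisj (fun j => (hEmeas j r).nullMeasurableSet),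
      tsum_fintype]
  have hval : ∀ r : ℕ, r < m + 1 → P (E (Fin.last m) r) = ((m+1 : ℕ) : ENNReal)⁻¹ := by
    intro r hr
    have hs := hsum1 r hr
    simp_rw [fun j => hPE_eq j r] at hs
    rw [Finset.sum_const, Finset.card_univ, Fintype.card_fin, nsmul_eq_mul] at hs
    have hne : ((m+1 : ℕ) : ENNReal) ≠ 0 := by simp
    have htop : ((m+1 : ℕ) : ENNReal) ≠ ⊤ := by simp
    calc P (E (Fin.last m) r)
        = ((m+1 : ℕ) : ENNReal)⁻¹ * (((m+1 : ℕ) : ENNReal) * P (E (Fin.last m) r)) := by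
          rw [← mul_assoc, ENNReal.inv_mul_cancel hne htop, one_mul]
      _ = ((m+1 : ℕ) : ENNReal)⁻¹ := by rw [hs, mul_one]
  have hAeq : {ω | φ (Fin.last m) ω ≤ orderStat m (fun i => φ i.castSucc ω) k}
      = ⋃ r : Fin k, E (Fin.last m) (r : ℕ) := by
    ext ω
    rw [Set.mem_setOf_eq, le_orderStat_iff hk1 hkm]
    have hcard : (univ.filter fun i : Fin m => φ i.castSucc ω < φ (Fin.last m) ω).card
        = rankF (X ω) (Fin.last m) := card_filter_castSucc (X ω)
    rw [hcard]
    simp only [Set.mem_iUnion, hEdef, Set.mem_setOf_eq]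
    constructor
    · intro h
      exact ⟨⟨rankF (X ω) (Fin.last m), by omega⟩, rfl⟩
    · rintro ⟨r, hr⟩
      have := r.isLt
      omega
  have hdisj2 : Pairwise (Function.onFun Disjoint fun r : Fin k => E (Fin.last m) (r : ℕ)) := by
    intro r r' hne
    rw [Function.onFun, Set.disjoint_left]
    intro ω h1 h2
    simp only [hEdef, Set.mem_setOf_eq] at h1 h2
    exact hne (Fin.ext (by omega))
  rw [hAeq, measure_iUnion hdisj2 (fun r => hEmeas _ _), tsum_fintype]
  have hv : ∀ r : Fin k, P (E (Fin.last m) (r : ℕ)) = ((m+1 : ℕ) : ENNReal)⁻¹ := by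
    intro r
    exact hval r (by have := r.isLt; omega)
  simp_rw [hv]
  rw [Finset.sum_const, Finset.card_univ, Fintype.card_fin, nsmul_eq_mul]
  rw [ENNReal.toReal_mul, ENNReal.toReal_inv]
  simp only [ENNReal.toReal_natCast]
  push_cast
  ring
end
end

section
/- Conditional independence implies zero marginal payout for the standard conditional-expectation game: fix j ∈ Fin d and S ⊆ Fin d with j ∉ S, and suppose p(y | x_{S∪{j}}) = p(y | x_S) for all x ∈ X and y ∈ Y. Let w : Y → ℝ be any real-valued outcome function, define the regression function f(x) := Σ_y w(y) · p(y|x) and the value function v_0(T, x) := Σ_{x' : x'_T = x_T} P(x' | x_T) · f(x') for T ⊆ Fin d. Then v_0(S ∪ {j}, x) = v_0(S, x) for every x ∈ X. -/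
open Finset Real

noncomputable section

/-- The standard conditional-expectation game
`v_0(T, x) = ∑_{x' : x'_T = x_T} P(x' | x_T) · f(x')` where
`f(x') = ∑_y w(y) p(y | x')` is the regression function. -/
def vZero {d : ℕ} {Xf : Fin d → Type*} {Y : Type*} [∀ j, Fintype (Xf j)] [Fintype Y]
    [∀ j, DecidableEq (Xf j)]
    (p : ((∀ j, Xf j) × Y) → ℝ) (w : Y → ℝ) (T : Finset (Fin d)) (x : ∀ j, Xf j) : ℝ :=
  ∑ x' : ∀ j, Xf j,
    if ∀ j ∈ T, x' j = x j then
      (margP p x' /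
          ∑ x'' : ∀ j, Xf j, if ∀ j ∈ T, x'' j = x j then margP p x'' else 0) *
        ∑ y : Y, w y * condP p Finset.univ x' y
    else 0

lemma sum_ite_univ_pi {d : ℕ} {Xf : Fin d → Type*} [∀ j, Fintype (Xf j)]
    [∀ j, DecidableEq (Xf j)] (g : (∀ j, Xf j) → ℝ) (x' : ∀ j, Xf j) :
    (∑ x'' : ∀ j, Xf j,
      if ∀ j ∈ (Finset.univ : Finset (Fin d)), x'' j = x' j then g x'' else 0) = g x' := by
  have h : ∀ x'' : ∀ j, Xf j,
      (∀ j ∈ (Finset.univ : Finset (Fin d)), x'' j = x' j) ↔ x'' = x' := by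
    intro x''; simp [funext_iff]
  simp only [h]
  simp

lemma condP_univ_eq {d : ℕ} {Xf : Fin d → Type*} {Y : Type*} [∀ j, Fintype (Xf j)] [Fintype Y]
    [∀ j, DecidableEq (Xf j)] (p : ((∀ j, Xf j) × Y) → ℝ) (x' : ∀ j, Xf j) (y : Y) :
    condP p Finset.univ x' y = p (x', y) / margP p x' := by
  unfold condP
  rw [sum_ite_univ_pi (fun x'' => p (x'', y)), sum_ite_univ_pi (fun x'' => ∑ y' : Y, p (x'', y'))]
  rfl

lemma vZero_eq {d : ℕ} {Xf : Fin d → Type*} {Y : Type*}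
    [∀ j, Fintype (Xf j)] [∀ j, Nonempty (Xf j)] [∀ j, DecidableEq (Xf j)]
    [Fintype Y] [Nonempty Y]
    (p : ((∀ j, Xf j) × Y) → ℝ)
    (hpos : ∀ z : ((∀ j, Xf j) × Y), 0 < p z)
    (w : Y → ℝ) (T : Finset (Fin d)) (x : ∀ j, Xf j) :
    vZero p w T x = ∑ y : Y, w y * condP p T x y := by
  have hm : ∀ x' : ∀ j, Xf j, 0 < margP p x' := fun x' =>
    Finset.sum_pos (fun y _ => hpos _) Finset.univ_nonempty
  set N : ℝ := ∑ x'' : ∀ j, Xf j, if ∀ j ∈ T, x'' j = x j then margP p x'' else 0 with hN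
  have hNpos : 0 < N := by
    refine Finset.sum_pos' (fun x'' _ => ?_) ⟨x, Finset.mem_univ x, by simp [hm x]⟩
    split
    · exact (hm _).le
    · exact le_rfl
  unfold vZero
  have step : ∀ x' : ∀ j, Xf j,
      (if ∀ j ∈ T, x' j = x j then
        (margP p x' / N) * ∑ y : Y, w y * condP p Finset.univ x' y else 0)
      = ∑ y : Y, (if ∀ j ∈ T, x' j = x j then w y * p (x', y) else 0) / N := by
    intro x'
    by_cases h : ∀ j ∈ T, x' j = x j
    · rw [if_pos h, Finset.mul_sum]
      apply Finset.sum_congr rfl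
      intro y _
      rw [if_pos h, condP_univ_eq]
      have hmne := (hm x').ne'
      field_simp
    · simp [h]
  rw [Finset.sum_congr rfl (fun x' _ => step x')]
  rw [Finset.sum_comm]
  apply Finset.sum_congr rfl
  intro y _
  unfold condP
  have hden : (∑ x' : ∀ j, Xf j, if ∀ j ∈ T, x' j = x j then ∑ y' : Y, p (x', y') else 0) = N := rfl
  rw [hden, ← mul_div_assoc, Finset.mul_sum, ← Finset.sum_div]
  congr 1
  apply Finset.sum_congr rfl
  intro x' _
  by_cases h : ∀ j ∈ T, x' j = x j <;> simp [h]

/-- conditional independence implies zero marginal payout for the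
standard conditional-expectation game. -/
theorem cond_indep_implies_zero_marginal_v0 {d : ℕ} (hd : 1 ≤ d) {Xf : Fin d → Type*} {Y : Type*}
    [∀ j, Fintype (Xf j)] [∀ j, Nonempty (Xf j)] [∀ j, DecidableEq (Xf j)]
    [Fintype Y] [Nonempty Y]
    (p : ((∀ j, Xf j) × Y) → ℝ)
    (hpos : ∀ z : ((∀ j, Xf j) × Y), 0 < p z)
    (hsum : ∑ z : ((∀ j, Xf j) × Y), p z = 1)
    (j : Fin d) (S : Finset (Fin d)) (hjS : j ∉ S)
    (hci : ∀ (x : ∀ j, Xf j) (y : Y), condP p (insert j S) x y = condP p S x y)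
    (w : Y → ℝ) (x : ∀ j, Xf j) :
    vZero p w (insert j S) x = vZero p w S x := by
  rw [vZero_eq p hpos, vZero_eq p hpos]
  exact Finset.sum_congr rfl (fun y _ => by rw [hci x y])
end
end
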